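/- An s-parallel-greedy graph with s even contains at most n^2 monotonic paths of exactly s/2 edges, where n is the number of vertices. -/

import Mathlib

open SimpleGraph


open SimpleGraph

/-- `M` witnesses that `G` is `s`-parallel-greedy. -/
def IsParallelGreedy {V : Type*} (G : SimpleGraph V) (s k : ℕ)
    (M : Fin k → SimpleGraph V) : Prop :=
  (∀ i, M i ≤ G) ∧
  (∀ e ∈ G.edgeSet, ∃ i, e ∈ (M i).edgeSet) ∧
  (Pairwise fun i j => Disjoint (M i).edgeSet (M j).edgeSet) ∧
  (∀ i, ∀ v u w : V, (M i).Adj v u → (M i).Adj v w → u = w) ∧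
  (∀ i : Fin k, ∀ u v : V, (M i).Adj u v →
    ∀ p : (⨆ j : {j : Fin k // j < i}, M j.1).Walk u v, s < p.length)

/-- A walk is monotonic (w.r.t. the matchings `M`) if its edges can be assigned
strictly increasing matching indices, each edge belonging to its assigned matching. -/
def IsMonotonic {V : Type*} {G : SimpleGraph V} {k : ℕ} (M : Fin k → SimpleGraph V)
    {u v : V} (p : G.Walk u v) : Prop :=
  ∃ l : List (Fin k), l.Chain' (· < ·) ∧
    List.Forall₂ (fun e i => e ∈ (M i).edgeSet) p.edges l

section Aux

variable {V : Type*} {G : SimpleGraph V} {s k : ℕ} {M : Fin k → SimpleGraph V}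

private lemma forall₂_mem_left {α β : Type*} {R : α → β → Prop} :
    ∀ {l₁ : List α} {l₂ : List β}, List.Forall₂ R l₁ l₂ → ∀ a ∈ l₁, ∃ b ∈ l₂, R a b
  | _, _, List.Forall₂.nil => by simp
  | _, _, List.Forall₂.cons h hs => by
      intro a ha
      rcases List.mem_cons.1 ha with rfl | ha
      · exact ⟨_, List.mem_cons_self, h⟩
      · obtain ⟨b, hb, hab⟩ := forall₂_mem_left hs a ha
        exact ⟨b, List.mem_cons_of_mem _ hb, hab⟩

private lemma exists_concat_of_length_ne_zero {u v : V} {p : G.Walk u v} (h : p.length ≠ 0) :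
    ∃ (x : V) (q : G.Walk u x) (ha : G.Adj x v), p = q.concat ha := by
  cases p with
  | nil => simp at h
  | cons ha p =>
    obtain ⟨x, q, h', hq⟩ := SimpleGraph.Walk.exists_cons_eq_concat ha p
    exact ⟨x, q, h', hq⟩

/-- Decompose a monotonic concat walk. -/
private lemma mono_concat {u x v : V} (p₁ : G.Walk u x) (h : G.Adj x v)
    (hm : IsMonotonic M (p₁.concat h)) :
    ∃ (i : Fin k) (l : List (Fin k)), s(x, v) ∈ (M i).edgeSet ∧
      List.Forall₂ (fun e j => e ∈ (M j).edgeSet) p₁.edges l ∧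
      l.Chain' (· < ·) ∧ ∀ c ∈ l, c < i := by
  obtain ⟨l, hc, hf⟩ := hm
  rw [SimpleGraph.Walk.edges_concat, ← List.forall₂_reverse_iff, List.concat_eq_append, List.reverse_concat,
    List.forall₂_cons_left_iff] at hf
  obtain ⟨i, l₂, he, hf, hrev⟩ := hf
  have hl : l = l₂.reverse ++ [i] := by
    have := congrArg List.reverse hrev
    simpa using this
  subst hl
  rw [List.Chain', List.isChain_iff_pairwise, List.pairwise_append] at hc
  refine ⟨i, l₂.reverse, he, ?_, List.isChain_iff_pairwise.mpr hc.1, ?_⟩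
  · rw [← List.forall₂_reverse_iff]; simpa using hf
  · intro c hcmem
    exact hc.2.2 c hcmem i (List.mem_singleton_self i)

/-- The greedy condition forbids short walks between endpoints of an `M i`-edge
using only earlier matchings. -/
private lemma no_short_walk (hPG : IsParallelGreedy G s k M) {i : Fin k} {x v : V}
    (hadj : (M i).Adj x v) (w : G.Walk x v) (hlen : w.length ≤ s)
    (hE : ∀ e ∈ w.edges, ∃ c, c < i ∧ e ∈ (M c).edgeSet) : False := by
  have hw : ∀ e ∈ w.edges, e ∈ (⨆ j : {j : Fin k // j < i}, M j.1).edgeSet := by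
    intro e he
    obtain ⟨c, hci, hec⟩ := hE e he
    exact SimpleGraph.edgeSet_mono
      (le_iSup (fun j : {j : Fin k // j < i} => M j.1) ⟨c, hci⟩) hec
  have := hPG.2.2.2.2 i x v hadj (w.transfer _ hw)
  rw [SimpleGraph.Walk.length_transfer] at this
  omega

private lemma mono_unique (hPG : IsParallelGreedy G s k M) :
    ∀ (n : ℕ) {u v : V} (p q : G.Walk u v), p.length + q.length = n →
      IsMonotonic M p → IsMonotonic M q → p.length + q.length ≤ s + 1 → p = q := by
  intro n
  induction n using Nat.strong_induction_on with
  | _ n ih =>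
  intro u v p q hn hp hq hlen
  by_cases hp0 : p.length = 0
  · have huv := SimpleGraph.Walk.eq_of_length_eq_zero hp0
    subst huv
    have hpnil : p = .nil := SimpleGraph.Walk.nil_iff_eq_nil.mp (SimpleGraph.Walk.length_eq_zero_iff.mp hp0)
    by_cases hq0 : q.length = 0
    · rw [hpnil, SimpleGraph.Walk.nil_iff_eq_nil.mp (SimpleGraph.Walk.length_eq_zero_iff.mp hq0)]
    · exfalso
      obtain ⟨y, q₁, ha, rfl⟩ := exists_concat_of_length_ne_zero hq0
      obtain ⟨j, l, he, hf, _, hlt⟩ := mono_concat q₁ ha hq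
      refine no_short_walk hPG ((SimpleGraph.mem_edgeSet _).mp he) q₁.reverse ?_ ?_
      · rw [SimpleGraph.Walk.length_reverse]
        rw [SimpleGraph.Walk.length_concat] at hlen
        omega
      · intro e hemem
        rw [SimpleGraph.Walk.edges_reverse, List.mem_reverse] at hemem
        obtain ⟨c, hc, hec⟩ := forall₂_mem_left hf e hemem
        exact ⟨c, hlt c hc, hec⟩
  · by_cases hq0 : q.length = 0
    · exfalso
      have huv := SimpleGraph.Walk.eq_of_length_eq_zero hq0
      subst huv
      obtain ⟨y, p₁, ha, rfl⟩ := exists_concat_of_length_ne_zero hp0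
      obtain ⟨j, l, he, hf, _, hlt⟩ := mono_concat p₁ ha hp
      refine no_short_walk hPG ((SimpleGraph.mem_edgeSet _).mp he) p₁.reverse ?_ ?_
      · rw [SimpleGraph.Walk.length_reverse]
        rw [SimpleGraph.Walk.length_concat] at hlen
        omega
      · intro e hemem
        rw [SimpleGraph.Walk.edges_reverse, List.mem_reverse] at hemem
        obtain ⟨c, hc, hec⟩ := forall₂_mem_left hf e hemem
        exact ⟨c, hlt c hc, hec⟩
    · obtain ⟨x, p₁, hpa, rfl⟩ := exists_concat_of_length_ne_zero hp0
      obtain ⟨y, q₁, hqa, rfl⟩ := exists_concat_of_length_ne_zero hq0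
      obtain ⟨i, lp, hxe, hfp, hcp, hlp⟩ := mono_concat p₁ hpa hp
      obtain ⟨j, lq, hye, hfq, hcq, hlq⟩ := mono_concat q₁ hqa hq
      rcases lt_trichotomy i j with hij | hij | hij
      · exfalso
        refine no_short_walk hPG ((SimpleGraph.mem_edgeSet _).mp hye)
          (q₁.reverse.append (p₁.concat hpa)) ?_ ?_
        · simp only [SimpleGraph.Walk.length_append, SimpleGraph.Walk.length_reverse,
            SimpleGraph.Walk.length_concat] at hlen ⊢
          omega
        · intro e hemem
          rw [SimpleGraph.Walk.edges_append, List.mem_append,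
            SimpleGraph.Walk.edges_reverse, List.mem_reverse,
            SimpleGraph.Walk.edges_concat, List.concat_eq_append, List.mem_append] at hemem
          rcases hemem with hemem | hemem | hemem
          · obtain ⟨c, hc, hec⟩ := forall₂_mem_left hfq e hemem
            exact ⟨c, hlq c hc, hec⟩
          · obtain ⟨c, hc, hec⟩ := forall₂_mem_left hfp e hemem
            exact ⟨c, lt_trans (hlp c hc) hij, hec⟩
          · rw [List.mem_singleton] at hemem
            exact ⟨i, hij, hemem ▸ hxe⟩
      · -- i = j : same last matching, matching property forces x = y
        subst hij
        have hxy : x = y := hPG.2.2.2.1 i v x y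
          (((SimpleGraph.mem_edgeSet _).mp hxe).symm) (((SimpleGraph.mem_edgeSet _).mp hye).symm)
        subst hxy
        have h₁ : p₁ = q₁ := by
          refine ih (p₁.length + q₁.length) ?_ p₁ q₁ rfl ⟨lp, hcp, hfp⟩ ⟨lq, hcq, hfq⟩ ?_
          · rw [← hn, SimpleGraph.Walk.length_concat, SimpleGraph.Walk.length_concat]; omega
          · rw [SimpleGraph.Walk.length_concat, SimpleGraph.Walk.length_concat] at hlen; omega
        rw [h₁]
      · exfalso
        refine no_short_walk hPG ((SimpleGraph.mem_edgeSet _).mp hxe)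
          (p₁.reverse.append (q₁.concat hqa)) ?_ ?_
        · simp only [SimpleGraph.Walk.length_append, SimpleGraph.Walk.length_reverse,
            SimpleGraph.Walk.length_concat] at hlen ⊢
          omega
        · intro e hemem
          rw [SimpleGraph.Walk.edges_append, List.mem_append,
            SimpleGraph.Walk.edges_reverse, List.mem_reverse,
            SimpleGraph.Walk.edges_concat, List.concat_eq_append, List.mem_append] at hemem
          rcases hemem with hemem | hemem | hemem
          · obtain ⟨c, hc, hec⟩ := forall₂_mem_left hfp e hemem
            exact ⟨c, hlp c hc, hec⟩
          · obtain ⟨c, hc, hec⟩ := forall₂_mem_left hfq e hemem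
            exact ⟨c, lt_trans (hlq c hc) hij, hec⟩
          · rw [List.mem_singleton] at hemem
            exact ⟨j, hij, hemem ▸ hye⟩

end Aux

/-- An `s`-parallel-greedy graph on `n` vertices (with `s` even) contains at most `n^2`
monotonic paths with exactly `s/2` edges: the set of such paths (recorded together with
their ordered endpoints) is finite of cardinality at most `n^2`. -/
theorem monotonic_path_count_le_sq
    {V : Type*} [Fintype V] (G : SimpleGraph V) (s k : ℕ) (hs : 2 ≤ s) (hse : Even s)
    (M : Fin k → SimpleGraph V) (hPG : IsParallelGreedy G s k M) :
    {x : (u : V) × (v : V) × G.Walk u v |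
        x.2.2.IsPath ∧ x.2.2.length = s / 2 ∧ IsMonotonic M x.2.2}.Finite ∧
    {x : (u : V) × (v : V) × G.Walk u v |
        x.2.2.IsPath ∧ x.2.2.length = s / 2 ∧ IsMonotonic M x.2.2}.ncard ≤
      Fintype.card V ^ 2 := by
  classical
  set S := {x : (u : V) × (v : V) × G.Walk u v |
      x.2.2.IsPath ∧ x.2.2.length = s / 2 ∧ IsMonotonic M x.2.2} with hS
  set f : ((u : V) × (v : V) × G.Walk u v) → V × V := fun x => (x.1, x.2.1) with hf
  have hinj : Set.InjOn f S := by
    rintro ⟨u, v, p⟩ hp ⟨u', v', q⟩ hq heq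
    simp only [hf, Prod.mk.injEq] at heq
    obtain ⟨rfl, rfl⟩ := heq
    obtain ⟨-, hplen, hpm⟩ := hp
    obtain ⟨-, hqlen, hqm⟩ := hq
    dsimp only at hplen hqlen
    have hpq : p = q := mono_unique (s := s) hPG _ p q rfl hpm hqm (by omega)
    rw [hpq]
  have hfin : S.Finite := Set.Finite.of_finite_image (Set.toFinite _) hinj
  refine ⟨hfin, ?_⟩
  calc S.ncard = (f '' S).ncard := (Set.ncard_image_of_injOn hinj).symm
    _ ≤ (Set.univ : Set (V × V)).ncard :=
        Set.ncard_le_ncard (Set.subset_univ _) (Set.toFinite _)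
    _ = Fintype.card V ^ 2 := by
        rw [Set.ncard_univ, Nat.card_eq_fintype_card, Fintype.card_prod, sq]
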